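/- For every non-Archimedean Polish abelian group C there exists a continuous surjective group homomorphism (ℤ^(ω))^ω → C. -/

import Mathlib

/-- `ℤ^(ω)`: the free abelian group `⨁_{n ∈ ℕ} ℤ`, equipped with the discrete topology. -/
def ZOmega : Type := ℕ →₀ ℤ

noncomputable instance : AddCommGroup ZOmega := inferInstanceAs (AddCommGroup (ℕ →₀ ℤ))
instance : Countable ZOmega := inferInstanceAs (Countable (ℕ →₀ ℤ))
instance : TopologicalSpace ZOmega := ⊥
instance : DiscreteTopology ZOmega := ⟨rfl⟩
instance : IsTopologicalAddGroup ZOmega where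
  continuous_add := continuous_of_discreteTopology
  continuous_neg := continuous_of_discreteTopology

open Filter Topology Set
open scoped Uniformity ENNReal

/-- Preimage of a Gδ set under a continuous map is Gδ. -/
theorem aux_isGδ_preimage {X Y : Type*} [TopologicalSpace X] [TopologicalSpace Y] {s : Set Y}
    (h : IsGδ s) {f : X → Y} (hf : Continuous f) : IsGδ (f ⁻¹' s) := by
  obtain ⟨T, hT, hTc, rfl⟩ := h
  rw [Set.preimage_sInter]
  exact IsGδ.biInter hTc fun t ht => ((hT t ht).preimage hf).isGδ

/-- Alexandrov: the range of an inducing map from a complete metric space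
into a metric space is a Gδ set. -/
theorem aux_isGδ_range {X Y : Type*} [MetricSpace X] [CompleteSpace X] [MetricSpace Y]
    {f : X → Y} (hf : Topology.IsInducing f) : IsGδ (Set.range f) := by
  set W : ℕ → Set Y := fun n =>
    {y | ∃ V : Set Y, IsOpen V ∧ y ∈ V ∧ EMetric.diam (f ⁻¹' V) ≤ ((n : ℝ≥0∞) + 1)⁻¹} with hW
  have hWopen : ∀ n, IsOpen (W n) := by
    intro n
    have : W n = ⋃ V ∈ {V : Set Y | IsOpen V ∧ EMetric.diam (f ⁻¹' V) ≤ ((n : ℝ≥0∞) + 1)⁻¹}, V := by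
      ext y
      simp only [hW, mem_setOf_eq, mem_iUnion]
      constructor
      · rintro ⟨V, h1, h2, h3⟩; exact ⟨V, ⟨h1, h3⟩, h2⟩
      · rintro ⟨V, ⟨h1, h3⟩, h2⟩; exact ⟨V, h1, h2, h3⟩
    rw [this]
    exact isOpen_biUnion fun V hV => hV.1
  have hsub : ∀ n, Set.range f ⊆ W n := by
    rintro n _ ⟨x, rfl⟩
    set r : ℝ≥0∞ := ((n : ℝ≥0∞) + 1)⁻¹ / 2 with hr
    have hropos : 0 < r := by
      apply ENNReal.div_pos
      · simp [ENNReal.inv_ne_zero, ENNReal.add_ne_top, ENNReal.natCast_ne_top n]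
      · exact ENNReal.ofNat_ne_top
    obtain ⟨V, hVo, hVeq⟩ := hf.isOpen_iff.1 (EMetric.isOpen_ball (x := x) (ε := r))
    refine ⟨V, hVo, ?_, ?_⟩
    · have : x ∈ f ⁻¹' V := by rw [hVeq]; exact EMetric.mem_ball_self hropos
      exact this
    · rw [hVeq]
      calc EMetric.diam (Metric.eball x r) ≤ 2 * r := EMetric.diam_ball
        _ = ((n : ℝ≥0∞) + 1)⁻¹ := by
            rw [hr, ENNReal.mul_div_cancel two_ne_zero ENNReal.ofNat_ne_top]
  have hkey : closure (Set.range f) ∩ ⋂ n, W n ⊆ Set.range f := by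
    rintro y ⟨hyc, hyW⟩
    set F := 𝓝 y ⊓ 𝓟 (Set.range f) with hF
    haveI hFne : F.NeBot := mem_closure_iff_clusterPt.1 hyc
    haveI : (Filter.comap f F).NeBot := by
      refine Filter.NeBot.comap_of_range_mem hFne ?_
      exact mem_inf_of_right (mem_principal_self _)
    have hC : Cauchy (Filter.comap f F) := by
      refine Metric.cauchy_iff.2 ⟨inferInstance, ?_⟩
      intro ε hε
      obtain ⟨n, hn⟩ := ENNReal.exists_inv_nat_lt
        (show ENNReal.ofReal ε ≠ 0 by simp [hε])
      obtain ⟨V, hVo, hyV, hVd⟩ := mem_iInter.1 hyW n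
      refine ⟨f ⁻¹' V, Filter.preimage_mem_comap (mem_inf_of_left (hVo.mem_nhds hyV)), ?_⟩
      intro a ha b hb
      have h1 : edist a b ≤ ((n : ℝ≥0∞) + 1)⁻¹ :=
        le_trans (EMetric.edist_le_diam_of_mem ha hb) hVd
      have h2 : ((n : ℝ≥0∞) + 1)⁻¹ ≤ ((n : ℝ≥0∞))⁻¹ :=
        ENNReal.inv_le_inv.2 (le_add_of_nonneg_right zero_le_one)
      have : edist a b < ENNReal.ofReal ε := lt_of_le_of_lt (h1.trans h2) hn
      exact (edist_lt_ofReal).1 this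
    obtain ⟨x, hx⟩ := CompleteSpace.complete hC
    have h1 : Filter.Tendsto f (Filter.comap f F) (𝓝 (f x)) :=
      (hf.continuous.tendsto x).mono_left hx
    have h2 : Filter.Tendsto f (Filter.comap f F) (𝓝 y) :=
      le_trans Filter.map_comap_le (le_trans inf_le_left le_rfl)
    exact ⟨x, tendsto_nhds_unique h1 h2⟩
  have heq : Set.range f = closure (Set.range f) ∩ ⋂ n, W n := by
    refine Set.Subset.antisymm ?_ hkey
    exact Set.subset_inter subset_closure (Set.subset_iInter hsub)
  rw [heq]
  exact (isClosed_closure.isGδ).inter (IsGδ.iInter fun n => (hWopen n).isGδ)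

/-- Baire category: a dense Gδ subgroup of a Polish abelian topological group is everything. -/
theorem aux_dense_Gδ_subgroup_eq_top {H : Type*} [AddCommGroup H] [TopologicalSpace H]
    [IsTopologicalAddGroup H] [PolishSpace H] (A : AddSubgroup H)
    (hGδ : IsGδ (A : Set H)) (hd : Dense (A : Set H)) : ∀ y : H, y ∈ A := by
  haveI : BaireSpace H := by
    letI := TopologicalSpace.upgradeIsCompletelyMetrizable H
    infer_instance
  intro y
  let e : H ≃ₜ H := (Homeomorph.neg H).trans (Homeomorph.addLeft y)
  have he : ∀ z, e z = y - z := by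
    intro z
    show y + -z = y - z
    rw [sub_eq_add_neg]
  have hBd : Dense (e '' (A : Set H)) := by
    rw [dense_iff_closure_eq, ← e.image_closure, hd.closure_eq, Set.image_univ,
      e.surjective.range_eq]
  have hBGδ : IsGδ (e '' (A : Set H)) := by
    have himg : e '' (A : Set H) = e.symm ⁻¹' (A : Set H) := by
      ext z
      constructor
      · rintro ⟨a, ha, rfl⟩; simpa using ha
      · intro hz; exact ⟨e.symm z, hz, e.apply_symm_apply z⟩
    rw [himg]
    exact aux_isGδ_preimage hGδ e.symm.continuous
  obtain ⟨z, hz1, hz2⟩ := (Dense.inter_of_Gδ hGδ hBGδ hd hBd).nonempty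
  obtain ⟨a, ha, hae⟩ := hz2
  rw [he a] at hae
  have : y = z + a := by rw [← hae]; abel
  rw [this]
  exact A.add_mem hz1 ha

/-- A discrete topological abelian group is complete in its group uniformity. -/
theorem aux_complete_discrete (G : Type*) [AddCommGroup G] [TopologicalSpace G]
    [IsTopologicalAddGroup G] [DiscreteTopology G] :
    @CompleteSpace G (IsTopologicalAddGroup.rightUniformSpace G) := by
  letI : UniformSpace G := IsTopologicalAddGroup.rightUniformSpace G
  haveI : IsUniformAddGroup G := isUniformAddGroup_of_addCommGroup
  constructor
  intro F hF
  have hmem : {p : G × G | p.2 - p.1 = 0} ∈ 𝓤 G := by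
    rw [uniformity_eq_comap_nhds_zero]
    exact Filter.preimage_mem_comap ((isOpen_discrete ({0} : Set G)).mem_nhds rfl)
  have hprod : {p : G × G | p.2 - p.1 = 0} ∈ F ×ˢ F := hF.2 hmem
  obtain ⟨s, hs, t, ht, hst⟩ := Filter.mem_prod_iff.1 hprod
  haveI := hF.1
  obtain ⟨x, hx⟩ := Filter.nonempty_of_mem (Filter.inter_mem hs ht)
  refine ⟨x, fun w hw => ?_⟩
  refine Filter.mem_of_superset ht fun y hy => ?_
  have h0 : y - x = 0 := hst (Set.mk_mem_prod hx.1 hy)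
  have hyx : y = x := by rwa [sub_eq_zero] at h0
  rw [hyx]
  exact mem_of_mem_nhds hw

/-- A Polish abelian topological group which embeds (inducing) into a complete Polish
uniform abelian group is complete in its own group uniformity. -/
theorem aux_completeSpace (C L : Type*) [AddCommGroup C] [TopologicalSpace C]
    [IsTopologicalAddGroup C] [PolishSpace C] [AddCommGroup L] [UniformSpace L]
    [IsUniformAddGroup L] [PolishSpace L] [CompleteSpace L]
    (j : C →+ L) (hind : Topology.IsInducing j) :
    @CompleteSpace C (IsTopologicalAddGroup.rightUniformSpace C) := by
  -- Step 1: the range of `j` is Gδ in `L`.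
  have hGδ : IsGδ (Set.range j) := by
    letI := TopologicalSpace.upgradeIsCompletelyMetrizable C
    letI := TopologicalSpace.upgradeIsCompletelyMetrizable L
    exact aux_isGδ_range hind
  -- Step 2: the range of `j` is closed in `L`, via Baire category in the closure.
  have hclosed : IsClosed (Set.range j) := by
    set H : AddSubgroup L := j.range.topologicalClosure with hH
    haveI : PolishSpace ↥H :=
      IsClosed.polishSpace (show IsClosed (H : Set L) from AddSubgroup.isClosed_topologicalClosure j.range)
    set A : AddSubgroup ↥H := j.range.addSubgroupOf H with hA
    have hAcoe : (A : Set ↥H) = Subtype.val ⁻¹' (Set.range j) := rfl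
    have hGδ' : IsGδ (A : Set ↥H) := by
      rw [hAcoe]; exact aux_isGδ_preimage hGδ continuous_subtype_val
    have hdense' : Dense (A : Set ↥H) := by
      intro h
      rw [mem_closure_iff]
      intro o ho hho
      obtain ⟨O, hO, rfl⟩ := isOpen_induced_iff.1 ho
      have hhH : (h : L) ∈ closure (Set.range j) := h.2
      obtain ⟨a, haO, haR⟩ := mem_closure_iff.1 hhH O hO hho
      have haH : a ∈ H := AddSubgroup.le_topologicalClosure j.range haR
      exact ⟨⟨a, haH⟩, haO, by rwa [hAcoe]⟩
    have hAll := aux_dense_Gδ_subgroup_eq_top A hGδ' hdense'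
    have heq : Set.range j = (H : Set L) := by
      apply Set.Subset.antisymm
      · exact fun x hx => AddSubgroup.le_topologicalClosure j.range hx
      · intro y hy
        have := hAll ⟨y, hy⟩
        rwa [hA, AddSubgroup.mem_addSubgroupOf] at this
    rw [heq]
    exact AddSubgroup.isClosed_topologicalClosure _
  -- Step 3: `j` is uniform inducing for the group uniformities, transfer completeness.
  letI : UniformSpace C := IsTopologicalAddGroup.rightUniformSpace C
  haveI : IsUniformAddGroup C := isUniformAddGroup_of_addCommGroup
  have h0 : Filter.comap j (𝓝 (0 : L)) = 𝓝 (0 : C) := by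
    have := hind.nhds_eq_comap 0
    rw [map_zero] at this
    exact this.symm
  have hui : IsUniformInducing j := by
    constructor
    rw [uniformity_eq_comap_nhds_zero L, uniformity_eq_comap_nhds_zero C, Filter.comap_comap]
    have hfun : ((fun p : L × L => p.2 - p.1) ∘ fun p : C × C => (j p.1, j p.2)) =
        j ∘ (fun p : C × C => p.2 - p.1) := by
      funext p
      simp [map_sub]
    rw [hfun, ← Filter.comap_comap, h0]
  exact hui.completeSpace hclosed.isComplete

/-- The identity additive equivalence between `ZOmega` and `ℕ →₀ ℤ`. -/
def ZOmega.equivFinsupp : ZOmega ≃+ (ℕ →₀ ℤ) :=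
  { toFun := fun x => x, invFun := fun x => x, left_inv := fun _ => rfl,
    right_inv := fun _ => rfl, map_add' := fun _ _ => rfl }

theorem aux_construct (C : Type) [AddCommGroup C] [UniformSpace C] [IsUniformAddGroup C]
    [NonarchimedeanAddGroup C] [CompleteSpace C] [T2Space C]
    [SecondCountableTopology C] :
    ∃ f : (ℕ → ZOmega) →+ C, Continuous f ∧ Function.Surjective f := by
  classical
  -- a decreasing basis of open subgroups with `u 0 = ⊤`
  obtain ⟨b, hb⟩ := (𝓝 (0:C)).exists_antitone_basis
  choose V hVb using fun n => NonarchimedeanAddGroup.is_nonarchimedean (b n) (hb.mem n)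
  let u : ℕ → OpenAddSubgroup C := fun n => Nat.rec ⊤ (fun m um => um ⊓ V m) n
  have husucc : ∀ n, u (n+1) = u n ⊓ V n := fun _ => rfl
  have huanti : Antitone u := antitone_nat_of_succ_le (fun n => by rw [husucc]; exact inf_le_left)
  have hubasis : ∀ s ∈ 𝓝 (0:C), ∃ n, (SetLike.coe (u n)) ⊆ s := by
    intro s hs
    obtain ⟨i, -, hi⟩ := hb.toHasBasis.mem_iff.1 hs
    refine ⟨i+1, fun x hx => hi (hVb i ?_)⟩
    have hx' : x ∈ u i ⊓ V i := by rw [← husucc]; exact hx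
    exact hx'.2
  have htend0 : ∀ (a : ℕ → C), (∀ n, a n ∈ u n) → Filter.Tendsto a atTop (𝓝 0) := by
    intro a ha
    rw [Filter.tendsto_atTop']
    intro s hs
    obtain ⟨m, hm⟩ := hubasis s hs
    exact ⟨m, fun n hn => hm (huanti hn (ha n))⟩
  -- dense sequences in each `u n`
  have hne : ∀ n, Nonempty ((SetLike.coe (u n))) := fun n => ⟨⟨0, zero_mem _⟩⟩
  let d : ℕ → ℕ → C := fun n k => (TopologicalSpace.denseSeq ((SetLike.coe (u n))) k : C)
  have hdmem : ∀ n k, d n k ∈ u n := fun n k =>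
    (TopologicalSpace.denseSeq (SetLike.coe (u n)) k).2
  have hddense : ∀ n (x : C), x ∈ u n → ∀ W : Set C, IsOpen W → x ∈ W → ∃ k, d n k ∈ W := by
    intro n x hx W hW hxW
    obtain ⟨k, hk⟩ := (TopologicalSpace.denseRange_denseSeq ((SetLike.coe (u n)))).exists_mem_open
      (hW.preimage continuous_subtype_val) ⟨⟨x, hx⟩, hxW⟩
    exact ⟨k, hk⟩
  -- the homomorphisms `g n : ZOmega →+ C`
  let gF : ℕ → (ℕ →₀ ℤ) →+ C := fun n => Finsupp.liftAddHom (fun k => zmultiplesHom C (d n k))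
  let g : ℕ → ZOmega →+ C := fun n => (gF n).comp ZOmega.equivFinsupp.toAddMonoidHom
  have hgmem : ∀ n (x : ZOmega), g n x ∈ u n := by
    intro n x
    show gF n (ZOmega.equivFinsupp x) ∈ u n
    rw [Finsupp.liftAddHom_apply]
    apply sum_mem
    intro k hk
    show (ZOmega.equivFinsupp x) k • d n k ∈ u n
    exact zsmul_mem (hdmem n k) _
  have hsing : ∀ n k, g n (ZOmega.equivFinsupp.symm (Finsupp.single k 1)) = d n k := by
    intro n k
    show gF n (ZOmega.equivFinsupp (ZOmega.equivFinsupp.symm (Finsupp.single k 1))) = d n k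
    rw [AddEquiv.apply_symm_apply]
    simp [gF]
  -- summability
  have hsum : ∀ x : ℕ → ZOmega, Summable (fun n => g n (x n)) := by
    intro x
    apply NonarchimedeanAddGroup.summable_of_tendsto_cofinite_zero
    rw [Nat.cofinite_eq_atTop]
    exact htend0 _ (fun n => hgmem n (x n))
  let F : (ℕ → ZOmega) →+ C := AddMonoidHom.mk' (fun x => ∑' n, g n (x n)) (by
    intro x y
    have hxy : (fun n => g n ((x + y) n)) = fun n => g n (x n) + g n (y n) := by
      funext n; simp [map_add]
    show (∑' n, g n ((x + y) n)) = (∑' n, g n (x n)) + ∑' n, g n (y n)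
    rw [hxy]
    exact Summable.tsum_add (hsum x) (hsum y))
  have hFmem : ∀ (x : ℕ → ZOmega) (n : ℕ), (∀ i < n, x i = 0) → F x ∈ u n := by
    intro x n hx
    have hhs : HasSum (fun i => g i (x i)) (F x) := (hsum x).hasSum
    refine (u n).isClosed.mem_of_tendsto hhs ?_
    filter_upwards with t
    apply sum_mem
    intro i hi
    by_cases h : i < n
    · rw [hx i h, map_zero]; exact zero_mem _
    · exact huanti (le_of_not_gt h) (hgmem i (x i))
  refine ⟨F, ?_, ?_⟩
  · apply continuous_of_continuousAt_zero F
    unfold ContinuousAt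
    rw [map_zero]
    intro s hs
    rw [Filter.mem_map]
    obtain ⟨n, hn⟩ := hubasis s hs
    have hS : {x : ℕ → ZOmega | ∀ i < n, x i = 0} ∈ 𝓝 (0 : ℕ → ZOmega) := by
      have hSe : {x : ℕ → ZOmega | ∀ i < n, x i = 0}
          = ⋂ i ∈ Finset.range n, (fun x : ℕ → ZOmega => x i) ⁻¹' {0} := by
        ext x; simp [Finset.mem_range]
      rw [hSe]
      refine (Filter.biInter_finset_mem _).2 fun i _ => ?_
      exact (continuous_apply i).continuousAt.preimage_mem_nhds
        ((isOpen_discrete ({0} : Set ZOmega)).mem_nhds rfl)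
    exact Filter.mem_of_superset hS (fun x hx => hn (hFmem x n hx))
  · intro c
    have step : ∀ n (r : C), ∃ k : ℕ, r ∈ u n → r - d n k ∈ u (n+1) := by
      intro n r
      by_cases hr : r ∈ u n
      · have hW : IsOpen ((fun y => r - y) ⁻¹' (SetLike.coe (u (n+1)))) :=
          (u (n+1)).isOpen.preimage (continuous_const.sub continuous_id)
        have hrW : r ∈ (fun y => r - y) ⁻¹' (SetLike.coe (u (n+1))) := by
          have : r - r ∈ u (n+1) := by rw [sub_self]; exact zero_mem _
          exact this
        obtain ⟨k, hk⟩ := hddense n r hr _ hW hrW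
        exact ⟨k, fun _ => hk⟩
      · exact ⟨0, fun h => absurd h hr⟩
    choose K hK using step
    let rs : ℕ → C := fun n => Nat.rec c (fun m rm => rm - d m (K m rm)) n
    have hrs0 : rs 0 = c := rfl
    have hrssucc : ∀ n, rs (n+1) = rs n - d n (K n (rs n)) := fun _ => rfl
    have hrsmem : ∀ n, rs n ∈ u n := by
      intro n
      induction n with
      | zero => trivial
      | succ n ih => rw [hrssucc]; exact hK n (rs n) ih
    let x : ℕ → ZOmega := fun n => ZOmega.equivFinsupp.symm (Finsupp.single (K n (rs n)) 1)
    have hgx : ∀ n, g n (x n) = d n (K n (rs n)) := fun n => hsing n (K n (rs n))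
    have hps : ∀ n, ∑ i ∈ Finset.range n, g i (x i) = c - rs n := by
      intro n
      induction n with
      | zero => simp [hrs0]
      | succ n ih =>
        rw [Finset.sum_range_succ, ih, hgx, hrssucc]
        abel
    have htends : Filter.Tendsto (fun n => ∑ i ∈ Finset.range n, g i (x i)) atTop (𝓝 c) := by
      have h1 : Filter.Tendsto rs atTop (𝓝 0) := htend0 rs hrsmem
      have h2 : Filter.Tendsto (fun n => c - rs n) atTop (𝓝 (c - 0)) := tendsto_const_nhds.sub h1
      rw [sub_zero] at h2
      have hfe : (fun n => ∑ i ∈ Finset.range n, g i (x i)) = fun n => c - rs n := funext hps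
      rw [hfe]
      exact h2
    have hFx : HasSum (fun n => g n (x n)) (F x) := (hsum x).hasSum
    exact ⟨x, tendsto_nhds_unique hFx.tendsto_sum_nat htends⟩

/-- For every non-Archimedean Polish abelian group `C` there exists a
continuous surjective group homomorphism `(ℤ^(ω))^ω → C`. -/
theorem exists_continuous_surjective_from_product_free_onto_nonarchimedean
    (C : Type) [AddCommGroup C] [TopologicalSpace C] [IsTopologicalAddGroup C] [PolishSpace C]
    [NonarchimedeanAddGroup C] :
    ∃ f : (ℕ → ZOmega) →+ C, Continuous f ∧ Function.Surjective f := by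
  classical
  have hT2 : T2Space C := inferInstance
  have hSC : SecondCountableTopology C := inferInstance
  -- a decreasing basis of open subgroups
  obtain ⟨b, hb⟩ := (𝓝 (0:C)).exists_antitone_basis
  choose V hVb using fun n => NonarchimedeanAddGroup.is_nonarchimedean (b n) (hb.mem n)
  obtain ⟨u, hu0, husucc⟩ :
      ∃ u : ℕ → OpenAddSubgroup C, u 0 = ⊤ ∧ ∀ n, u (n+1) = u n ⊓ V n :=
    ⟨fun n => Nat.rec ⊤ (fun m um => um ⊓ V m) n, rfl, fun _ => rfl⟩
  have hubasis : ∀ s ∈ 𝓝 (0:C), ∃ n, (SetLike.coe (u n)) ⊆ s := by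
    intro s hs
    obtain ⟨i, -, hi⟩ := hb.toHasBasis.mem_iff.1 hs
    refine ⟨i+1, fun x hx => hi (hVb i ?_)⟩
    have hx' : x ∈ u i ⊓ V i := by rw [← husucc]; exact hx
    exact hx'.2
  -- quotients by the open subgroups: countable discrete Polish groups
  haveI hQc : ∀ n, Countable (C ⧸ (u n).toAddSubgroup) := by
    intro n
    obtain ⟨s, hsc, hsd⟩ := TopologicalSpace.exists_countable_dense C
    haveI := hsc.to_subtype
    refine Function.Surjective.countable
      (f := fun x : s => (QuotientAddGroup.mk x.1 : C ⧸ (u n).toAddSubgroup)) ?_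
    intro q
    obtain ⟨c0, rfl⟩ := QuotientAddGroup.mk_surjective q
    have hopen : IsOpen ((fun y => -c0 + y) ⁻¹' (SetLike.coe (u n))) :=
      (u n).isOpen.preimage (continuous_const.add continuous_id)
    have hne : ((fun y => -c0 + y) ⁻¹' (SetLike.coe (u n))).Nonempty := by
      refine ⟨c0, ?_⟩
      have : -c0 + c0 ∈ u n := by rw [neg_add_cancel]; exact zero_mem _
      exact this
    obtain ⟨a, ha_pre, has⟩ := hsd.inter_open_nonempty _ hopen hne
    refine ⟨⟨a, has⟩, ?_⟩
    have h1 : -c0 + a ∈ (u n).toAddSubgroup := ha_pre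
    have h2 : -a + c0 ∈ (u n).toAddSubgroup := by
      have := (u n).toAddSubgroup.neg_mem h1
      simpa [neg_add_rev] using this
    exact (QuotientAddGroup.eq).2 h2
  have hQP : ∀ n, PolishSpace (C ⧸ (u n).toAddSubgroup) := fun n => inferInstance
  -- the embedding into the product of the quotients
  let j : C →+ (∀ n, C ⧸ (u n).toAddSubgroup) :=
    { toFun := fun c n => (QuotientAddGroup.mk c : C ⧸ (u n).toAddSubgroup)
      map_zero' := by funext n; simp
      map_add' := by intro a b; funext n; simp }
  have hjc : Continuous j := continuous_pi (fun n => continuous_quot_mk)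
  have hind : Topology.IsInducing j := by
    rw [Topology.isInducing_iff_nhds]
    intro x
    refine le_antisymm ((hjc.tendsto x).le_comap) ?_
    intro s hs
    have h's : (fun y => x + y) ⁻¹' s ∈ 𝓝 (0 : C) := by
      have hx0 : Filter.Tendsto (fun y => x + y) (𝓝 (0:C)) (𝓝 x) := by
        simpa using (continuous_add_left x).tendsto (0:C)
      exact hx0 hs
    obtain ⟨n, hn⟩ := hubasis _ h's
    refine Filter.mem_of_superset (Filter.preimage_mem_comap
      ((continuous_apply n).continuousAt.preimage_mem_nhds
        ((isOpen_discrete ({j x n} : Set (C ⧸ (u n).toAddSubgroup))).mem_nhds rfl))) ?_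
    intro c hc
    have hc' : (QuotientAddGroup.mk c : C ⧸ (u n).toAddSubgroup) = QuotientAddGroup.mk x := hc
    have h1 : -c + x ∈ (u n).toAddSubgroup := (QuotientAddGroup.eq).1 hc'
    have h2 : -x + c ∈ u n := by
      have := (u n).toAddSubgroup.neg_mem h1
      simpa [neg_add_rev] using this
    have h3 := hn h2
    simpa using h3
  -- uniform structures on the quotients and the product
  letI : ∀ n, UniformSpace (C ⧸ (u n).toAddSubgroup) :=
    fun n => IsTopologicalAddGroup.rightUniformSpace (C ⧸ (u n).toAddSubgroup)
  haveI : ∀ n, IsUniformAddGroup (C ⧸ (u n).toAddSubgroup) :=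
    fun n => isUniformAddGroup_of_addCommGroup
  haveI : ∀ n, CompleteSpace (C ⧸ (u n).toAddSubgroup) :=
    fun n => aux_complete_discrete (C ⧸ (u n).toAddSubgroup)
  haveI : ∀ n, PolishSpace (C ⧸ (u n).toAddSubgroup) := hQP
  haveI : IsUniformAddGroup (∀ n, C ⧸ (u n).toAddSubgroup) := inferInstance
  haveI : CompleteSpace (∀ n, C ⧸ (u n).toAddSubgroup) := inferInstance
  haveI : PolishSpace (∀ n, C ⧸ (u n).toAddSubgroup) := inferInstance
  -- completeness of C
  letI : UniformSpace C := IsTopologicalAddGroup.rightUniformSpace C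
  haveI : IsUniformAddGroup C := isUniformAddGroup_of_addCommGroup
  haveI : CompleteSpace C := aux_completeSpace C (∀ n, C ⧸ (u n).toAddSubgroup) j hind
  haveI : T2Space C := hT2
  haveI : SecondCountableTopology C := hSC
  haveI : NonarchimedeanAddGroup C := by assumption
  exact aux_construct C
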